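/- Let L be a smooth Lagrangian density on the target and define the pulled-back density L₀(m₀) := J_Φ(m₀) · L̃(Φ(m₀), TΨ̃(Φ(m₀))), where Ψ̃ ∘ Φ = π is a fixed projection, Φ a diffeomorphism, and J_Φ = det TΦ. Then the partial derivative of L₀ with respect to the Jacobian variable TΦ satisfies ∂L₀/∂TΦ = −J_Φ (TΦ)^{-⋆}(Tπ)^⋆ (∂L̃/∂TΨ̃ ∘ Φ)(TΦ)^{-⋆} + L₀ (TΦ)^{-⋆}, and consequently the Noether tensor of Φ, 𝔹 := (TΦ)^⋆ (∂L₀/∂TΦ) − L₀ I⋆, equals −J_Φ (TΦ)^⋆ (𝕋^N_{Ψ̃} ∘ Φ)(TΦ)^{-⋆} − L₀ I⋆, where 𝕋^N_{Ψ̃} = (TΨ̃)^⋆ (∂L̃/∂TΨ̃) − L̃ I⋆ is the Noether tensor of Ψ̃. -/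

import Mathlib

open scoped BigOperators
open Matrix

set_option maxHeartbeats 1000000

noncomputable def detCM (n : ℕ) : ContinuousMultilinearMap ℝ (fun _ : Fin n => (Fin n → ℝ)) ℝ :=
  MultilinearMap.mkContinuous
    ((Matrix.detRowAlternating : (Fin n → ℝ) [⋀^Fin n]→ₗ[ℝ] ℝ)).toMultilinearMap
    (Nat.factorial n) (by
      intro m
      show ‖(Matrix.of m).det‖ ≤ _
      rw [Matrix.det_apply']
      refine le_trans (norm_sum_le _ _) ?_
      have h1 : ∀ σ : Equiv.Perm (Fin n),
          ‖(Equiv.Perm.sign σ : ℝ) * ∏ i, Matrix.of m (σ i) i‖ ≤ ∏ i, ‖m i‖ := by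
        intro σ
        rw [norm_mul]
        have hs : ‖((Equiv.Perm.sign σ : ℤ) : ℝ)‖ = 1 := by
          rcases Int.units_eq_one_or (Equiv.Perm.sign σ) with h | h <;> simp [h]
        rw [hs, one_mul]
        calc ‖∏ i, Matrix.of m (σ i) i‖ ≤ ∏ i, ‖Matrix.of m (σ i) i‖ := by
              simp only [Real.norm_eq_abs, Finset.abs_prod, le_refl]
          _ ≤ ∏ i, ‖m (σ i)‖ := by
              refine Finset.prod_le_prod (fun _ _ => norm_nonneg _) fun i _ => ?_
              exact (norm_le_pi_norm (m (σ i)) i)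
          _ = ∏ i, ‖m i‖ := Equiv.prod_comp σ (fun i => ‖m i‖)
      refine le_trans (Finset.sum_le_sum fun σ _ => h1 σ) ?_
      rw [Finset.sum_const, Finset.card_univ, Fintype.card_perm, Fintype.card_fin, nsmul_eq_mul])

theorem detCM_apply (n : ℕ) (m : Fin n → Fin n → ℝ) : detCM n m = (Matrix.of m).det := rfl

theorem hasFDerivAt_det {n : ℕ} (A : Fin n → Fin n → ℝ) :
    HasFDerivAt (fun M : Fin n → Fin n → ℝ => (Matrix.of M).det) ((detCM n).linearDeriv A) A :=
  (detCM n).hasFDerivAt A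

noncomputable def mulCLM (p q s : ℕ) :
    (Fin p → Fin q → ℝ) →L[ℝ] (Fin q → Fin s → ℝ) →L[ℝ] (Fin p → Fin s → ℝ) :=
  LinearMap.mkContinuous₂
    (LinearMap.mk₂ ℝ (fun A B => fun i j => (Matrix.of A * Matrix.of B) i j)
      (fun A A' B => by funext i j; exact congrFun (congrFun (congrArg (fun M => (M : Matrix _ _ ℝ)) (Matrix.add_mul (Matrix.of A) (Matrix.of A') (Matrix.of B))) i) j)
      (fun c A B => by funext i j; exact congrFun (congrFun (congrArg (fun M => (M : Matrix _ _ ℝ)) (Matrix.smul_mul c (Matrix.of A) (Matrix.of B))) i) j)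
      (fun A B B' => by funext i j; exact congrFun (congrFun (congrArg (fun M => (M : Matrix _ _ ℝ)) (Matrix.mul_add (Matrix.of A) (Matrix.of B) (Matrix.of B'))) i) j)
      (fun c A B => by funext i j; exact congrFun (congrFun (congrArg (fun M => (M : Matrix _ _ ℝ)) (Matrix.mul_smul (Matrix.of A) c (Matrix.of B))) i) j))
    q (by
      intro A B
      refine (pi_norm_le_iff_of_nonneg (by positivity)).2 fun i => ?_
      refine (pi_norm_le_iff_of_nonneg (by positivity)).2 fun j => ?_
      show ‖∑ k, A i k * B k j‖ ≤ _
      refine le_trans (norm_sum_le _ _) ?_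
      have h1 : ∀ k, ‖A i k * B k j‖ ≤ ‖A‖ * ‖B‖ := fun k => by
        rw [norm_mul]
        exact mul_le_mul (le_trans (norm_le_pi_norm (A i) k) (norm_le_pi_norm A i))
          (le_trans (norm_le_pi_norm (B k) j) (norm_le_pi_norm B k)) (norm_nonneg _)
          (norm_nonneg _)
      refine le_trans (Finset.sum_le_sum fun k _ => h1 k) ?_
      rw [Finset.sum_const, Finset.card_univ, Fintype.card_fin, nsmul_eq_mul, mul_assoc])

theorem mulCLM_apply (p q s : ℕ) (A : Fin p → Fin q → ℝ) (B : Fin q → Fin s → ℝ) :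
    mulCLM p q s A B = fun i j => (Matrix.of A * Matrix.of B) i j := rfl

theorem hasFDerivAt_inv_aux {n : ℕ} (A₀ : Fin n → Fin n → ℝ) (hA : IsUnit (Matrix.of A₀).det) :
    ∃ G : (Fin n → Fin n → ℝ) →L[ℝ] (Fin n → Fin n → ℝ),
      HasFDerivAt (fun A : Fin n → Fin n → ℝ => (fun i j => (Matrix.of A)⁻¹ i j)) G A₀ ∧
      ∀ H, Matrix.of (G H) = -((Matrix.of A₀)⁻¹ * Matrix.of H * (Matrix.of A₀)⁻¹) := by
  have hdet0 : (Matrix.of A₀).det ≠ 0 := hA.ne_zero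
  -- differentiability of the update maps
  have hupdate : ∀ (c : Fin n → ℝ) (j : Fin n),
      DifferentiableAt ℝ (fun A : Fin n → Fin n → ℝ => Function.update A j c) A₀ := by
    intro c j
    rw [differentiableAt_pi]
    intro k
    rcases eq_or_ne k j with rfl | hk
    · simp only [Function.update_self]
      exact differentiableAt_const _
    · simp only [Function.update_of_ne hk]
      exact (ContinuousLinearMap.proj k :
        (Fin n → Fin n → ℝ) →L[ℝ] (Fin n → ℝ)).differentiableAt
  have hadjDiff : ∀ i j, DifferentiableAt ℝ
      (fun A : Fin n → Fin n → ℝ => (Matrix.of A).adjugate i j) A₀ := by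
    intro i j
    have hrw : (fun A : Fin n → Fin n → ℝ => (Matrix.of A).adjugate i j)
        = fun A => (Matrix.of (Function.update A j (Pi.single i 1))).det := by
      funext A
      rw [Matrix.adjugate_apply]
      rfl
    rw [hrw]
    exact ((hasFDerivAt_det _).differentiableAt).comp _ (hupdate _ j)
  have hinvD : DifferentiableAt ℝ
      (fun A : Fin n → Fin n → ℝ => (fun i j => (Matrix.of A)⁻¹ i j)) A₀ := by
    rw [differentiableAt_pi]
    intro i
    rw [differentiableAt_pi]
    intro j
    have hrw : (fun A : Fin n → Fin n → ℝ => (Matrix.of A)⁻¹ i j)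
        = fun A => ((Matrix.of A).det)⁻¹ * (Matrix.of A).adjugate i j := by
      funext A
      rw [Matrix.inv_def]
      simp [Ring.inverse_eq_inv']
    rw [hrw]
    exact (((hasFDerivAt_det A₀).differentiableAt).inv hdet0).mul (hadjDiff i j)
  set invf : (Fin n → Fin n → ℝ) → (Fin n → Fin n → ℝ) :=
    fun A => (fun i j => (Matrix.of A)⁻¹ i j) with hinvf
  set G := fderiv ℝ invf A₀ with hGdef
  have hG : HasFDerivAt invf G A₀ := hinvD.hasFDerivAt
  refine ⟨G, hG, ?_⟩
  -- local identity A * A⁻¹ = 1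
  have hcont : Continuous (fun A : Fin n → Fin n → ℝ => (Matrix.of A).det) := by
    have := (detCM n).cont
    exact this
  have hnhds : {A : Fin n → Fin n → ℝ | (Matrix.of A).det ≠ 0} ∈ nhds A₀ :=
    (isOpen_compl_singleton.preimage hcont).mem_nhds hdet0
  have heq : (fun A : Fin n → Fin n → ℝ => mulCLM n n n A (invf A))
      =ᶠ[nhds A₀] (fun _ => fun i j => (1 : Matrix (Fin n) (Fin n) ℝ) i j) := by
    filter_upwards [hnhds] with A hA'
    have h1 := Matrix.mul_nonsing_inv (Matrix.of A) (isUnit_iff_ne_zero.2 hA')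
    funext i j
    show (Matrix.of A * (Matrix.of A)⁻¹) i j = (1 : Matrix (Fin n) (Fin n) ℝ) i j
    rw [h1]
  have hb := (mulCLM n n n).isBoundedBilinearMap
  have hpair : HasFDerivAt (fun A : Fin n → Fin n → ℝ => (A, invf A))
      ((ContinuousLinearMap.id ℝ _).prod G) A₀ := HasFDerivAt.prodMk (hasFDerivAt_id A₀) hG
  have hF : HasFDerivAt (fun A : Fin n → Fin n → ℝ => mulCLM n n n A (invf A))
      ((hb.deriv (A₀, invf A₀)).comp ((ContinuousLinearMap.id ℝ _).prod G)) A₀ :=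
    by have := (hb.hasFDerivAt (A₀, invf A₀)).comp A₀ hpair; exact this
  have hzero : HasFDerivAt (fun A : Fin n → Fin n → ℝ => mulCLM n n n A (invf A))
      (0 : (Fin n → Fin n → ℝ) →L[ℝ] (Fin n → Fin n → ℝ)) A₀ :=
    (hasFDerivAt_const _ _).congr_of_eventuallyEq heq
  have huniq := hF.unique hzero
  intro H
  have happ := congrFun (congrArg (fun (L : (Fin n → Fin n → ℝ) →L[ℝ] (Fin n → Fin n → ℝ))
    => (L : (Fin n → Fin n → ℝ) → (Fin n → Fin n → ℝ))) huniq) H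
  have happ2 : mulCLM n n n H (invf A₀) + mulCLM n n n A₀ (G H) = 0 := by
    have := hb.deriv_apply (A₀, invf A₀) (H, G H)
    simpa [this, add_comm] using happ
  have hmat : Matrix.of H * (Matrix.of A₀)⁻¹ + Matrix.of A₀ * Matrix.of (G H) = 0 := by
    ext i j
    exact congrFun (congrFun happ2 i) j
  have h2 : Matrix.of A₀ * Matrix.of (G H) = -(Matrix.of H * (Matrix.of A₀)⁻¹) :=
    eq_neg_of_add_eq_zero_left (by rw [add_comm] at hmat; exact hmat)
  calc Matrix.of (G H) = ((Matrix.of A₀)⁻¹ * Matrix.of A₀) * Matrix.of (G H) := by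
        rw [Matrix.nonsing_inv_mul _ hA, Matrix.one_mul]
    _ = (Matrix.of A₀)⁻¹ * (Matrix.of A₀ * Matrix.of (G H)) := Matrix.mul_assoc _ _ _
    _ = (Matrix.of A₀)⁻¹ * -(Matrix.of H * (Matrix.of A₀)⁻¹) := by rw [h2]
    _ = -((Matrix.of A₀)⁻¹ * Matrix.of H * (Matrix.of A₀)⁻¹) := by
        rw [Matrix.mul_neg, Matrix.mul_assoc]

theorem clm_eq_sum {r n : ℕ} (φ : (Fin r → Fin n → ℝ) →L[ℝ] ℝ) (K : Fin r → Fin n → ℝ) :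
    φ K = ∑ I, ∑ α, K I α * φ (Pi.single I (Pi.single α 1) : Fin r → Fin n → ℝ) := by
  have hK : K = ∑ I, ∑ α, K I α • (Pi.single I (Pi.single α 1) : Fin r → Fin n → ℝ) := by
    funext i ν
    simp [Finset.sum_apply, Pi.single_apply, ite_apply, Finset.sum_ite_eq, smul_eq_mul]
  conv_lhs => rw [hK]
  simp [map_sum, _root_.map_smul, smul_eq_mul]

theorem mul_single_mul {p n : ℕ} (a b : Fin n) (X : Matrix (Fin p) (Fin n) ℝ)
    (Y : Matrix (Fin n) (Fin n) ℝ) (k : Fin p) (m : Fin n) :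
    (X * (Matrix.of (Pi.single a (Pi.single b 1) : Fin n → Fin n → ℝ) * Y)) k m
      = X k a * Y b m := by
  simp [Matrix.mul_apply, Pi.single_apply, ite_apply, Pi.zero_apply, ite_mul, mul_ite,
    zero_mul, mul_zero, Finset.mul_sum, Finset.sum_ite_eq, Finset.sum_ite_eq']

/-- derivative of the pulled-back Lagrangian density
`L₀(A) = det A · ℓ(Tπ A⁻¹)` with respect to the Jacobian variable `A = TΦ`:
`∂L₀/∂TΦ = −J_Φ (TΦ)^{-⋆}(Tπ)^⋆ (∂ℓ/∂TΨ̃)(TΦ)^{-⋆} + L₀ (TΦ)^{-⋆}`, and the Noether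
tensor of Φ equals `−J_Φ (TΦ)^⋆ (𝕋^N_{Ψ̃}) (TΦ)^{-⋆} − L₀ I⋆` where
`𝕋^N_{Ψ̃} = (TΨ̃)^⋆ (∂ℓ/∂TΨ̃) − ℓ I⋆`. -/
theorem pulled_back_lagrangian_derivative_and_noether_tensor (r n : ℕ)
    (Tπ : Fin r → Fin n → ℝ)
    (ℓ : (Fin r → Fin n → ℝ) → ℝ) (hℓ : Differentiable ℝ ℓ)
    (A₀ : Fin n → Fin n → ℝ) (hA : IsUnit (Matrix.of A₀).det)
    -- pulled-back Lagrangian density on the invertible matrix variable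
    (Lz : (Fin n → Fin n → ℝ) → ℝ)
    (hLz : ∀ A : Fin n → Fin n → ℝ,
      Lz A = (Matrix.of A).det * ℓ (fun i ν => (Matrix.of Tπ * (Matrix.of A)⁻¹) i ν))
    -- Q = TΨ̃ = Tπ (TΦ)⁻¹ at the point under consideration
    (Q : Fin r → Fin n → ℝ)
    (hQ : ∀ i ν, Q i ν = (Matrix.of Tπ * (Matrix.of A₀)⁻¹) i ν)
    -- E = ∂ℓ/∂TΨ̃ at Q
    (E : Fin r → Fin n → ℝ)
    (hE : ∀ I α, E I α = fderiv ℝ ℓ Q (Pi.single I (Pi.single α 1)))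
    -- D = ∂L₀/∂TΦ at A₀
    (D : Fin n → Fin n → ℝ)
    (hD : ∀ a b, D a b = fderiv ℝ Lz A₀ (Pi.single a (Pi.single b 1))) :
    (∀ a b, D a b =
        -(Matrix.of A₀).det *
            ((((Matrix.of A₀)⁻¹)ᵀ) * (Matrix.of Tπ)ᵀ * Matrix.of E * (((Matrix.of A₀)⁻¹)ᵀ)) a b
          + Lz A₀ * (((Matrix.of A₀)⁻¹)ᵀ) a b)
    ∧ ((Matrix.of A₀)ᵀ * Matrix.of D - Lz A₀ • (1 : Matrix (Fin n) (Fin n) ℝ)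
        = -((Matrix.of A₀).det •
              ((Matrix.of A₀)ᵀ *
                ((Matrix.of Q)ᵀ * Matrix.of E - ℓ Q • (1 : Matrix (Fin n) (Fin n) ℝ)) *
                (((Matrix.of A₀)⁻¹)ᵀ)))
          - Lz A₀ • (1 : Matrix (Fin n) (Fin n) ℝ)) := by
  obtain ⟨G, hGd, hGmat⟩ := hasFDerivAt_inv_aux A₀ hA
  have hdet0 : (Matrix.of A₀).det ≠ 0 := hA.ne_zero
  have hcA : (fun i ν => (Matrix.of Tπ * Matrix.of (fun i j => (Matrix.of A₀)⁻¹ i j)) i ν) = Q := by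
    funext i ν
    rw [hQ i ν]
    rfl
  have hcd : HasFDerivAt
      (fun A : Fin n → Fin n → ℝ => mulCLM r n n Tπ (fun i j => (Matrix.of A)⁻¹ i j))
      ((mulCLM r n n Tπ).comp G) A₀ :=
    (mulCLM r n n Tπ).hasFDerivAt.comp A₀ hGd
  have hcomp : HasFDerivAt
      (fun A : Fin n → Fin n → ℝ => ℓ (mulCLM r n n Tπ (fun i j => (Matrix.of A)⁻¹ i j)))
      ((fderiv ℝ ℓ Q).comp ((mulCLM r n n Tπ).comp G)) A₀ := by
    have hl : HasFDerivAt ℓ (fderiv ℝ ℓ Q)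
        (mulCLM r n n Tπ (fun i j => (Matrix.of A₀)⁻¹ i j)) := by
      have : mulCLM r n n Tπ (fun i j => (Matrix.of A₀)⁻¹ i j) = Q := hcA
      rw [this]
      exact (hℓ Q).hasFDerivAt
    exact hl.comp A₀ hcd
  have hLzf : Lz = fun A : Fin n → Fin n → ℝ =>
      (Matrix.of A).det * ℓ (mulCLM r n n Tπ (fun i j => (Matrix.of A)⁻¹ i j)) :=
    funext fun A => hLz A
  have hmulD : HasFDerivAt Lz
      ((Matrix.of A₀).det • ((fderiv ℝ ℓ Q).comp ((mulCLM r n n Tπ).comp G))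
        + ℓ (mulCLM r n n Tπ (fun i j => (Matrix.of A₀)⁻¹ i j)) • (detCM n).linearDeriv A₀) A₀ := by
    rw [hLzf]
    exact (hasFDerivAt_det A₀).mul hcomp
  have hfd := hmulD.fderiv
  have part1 : ∀ a b, D a b =
      -(Matrix.of A₀).det *
          ((((Matrix.of A₀)⁻¹)ᵀ) * (Matrix.of Tπ)ᵀ * Matrix.of E * (((Matrix.of A₀)⁻¹)ᵀ)) a b
        + Lz A₀ * (((Matrix.of A₀)⁻¹)ᵀ) a b := by
    intro a b
    have hDab : D a b =
        (Matrix.of A₀).det * (fderiv ℝ ℓ Q ((mulCLM r n n Tπ)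
            (G (Pi.single a (Pi.single b 1)))))
          + ℓ Q * ((detCM n).linearDeriv A₀ (Pi.single a (Pi.single b 1))) := by
      rw [hD a b, hfd]
      simp only [ContinuousLinearMap.add_apply, ContinuousLinearMap.smul_apply,
        ContinuousLinearMap.comp_apply, smul_eq_mul]
      have hcA' : ((mulCLM r n n) Tπ) (fun i j => (Matrix.of A₀)⁻¹ i j) = Q := by
        funext i ν
        rw [hQ i ν]
        rfl
      rw [hcA']
    -- the det part
    have hT1 : (detCM n).linearDeriv A₀ (Pi.single a (Pi.single b 1))
        = (Matrix.of A₀).adjugate b a := by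
      rw [ContinuousMultilinearMap.linearDeriv_apply]
      rw [Finset.sum_eq_single a]
      · have h1 : (Pi.single a (Pi.single b 1) : Fin n → Fin n → ℝ) a = Pi.single b 1 :=
          Pi.single_eq_same _ _
        rw [h1, detCM_apply, Matrix.adjugate_apply]
        rfl
      · intro i _ hi
        have h0 : (Pi.single a (Pi.single b 1) : Fin n → Fin n → ℝ) i = 0 :=
          Pi.single_eq_of_ne hi _
        rw [h0, detCM_apply]
        refine Matrix.det_eq_zero_of_row_eq_zero i fun j => ?_
        show Function.update A₀ i 0 i j = 0
        rw [Function.update_self]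
        rfl
      · intro h
        exact absurd (Finset.mem_univ a) h
    have hadj : (Matrix.of A₀).adjugate b a = (Matrix.of A₀).det * (Matrix.of A₀)⁻¹ b a := by
      have hba : (Matrix.of A₀)⁻¹ b a
          = ((Matrix.of A₀).det)⁻¹ * (Matrix.of A₀).adjugate b a := by
        rw [Matrix.inv_def]
        simp [Ring.inverse_eq_inv', Matrix.smul_apply, smul_eq_mul]
      rw [hba]
      field_simp
    -- the ℓ-derivative part
    have hK : ∀ I α, ((mulCLM r n n Tπ) (G (Pi.single a (Pi.single b 1)))) I α
        = -((Matrix.of Tπ * (Matrix.of A₀)⁻¹) I a * (Matrix.of A₀)⁻¹ b α) := by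
      intro I α
      show (Matrix.of Tπ * Matrix.of (G (Pi.single a (Pi.single b 1)))) I α = _
      rw [hGmat (Pi.single a (Pi.single b 1)), Matrix.mul_neg, ← Matrix.mul_assoc,
        ← Matrix.mul_assoc, Matrix.mul_assoc (Matrix.of Tπ * (Matrix.of A₀)⁻¹)]
      rw [Matrix.neg_apply, mul_single_mul]
    have hT2 : fderiv ℝ ℓ Q ((mulCLM r n n Tπ) (G (Pi.single a (Pi.single b 1))))
        = ∑ I, ∑ α, -((Matrix.of Tπ * (Matrix.of A₀)⁻¹) I a * (Matrix.of A₀)⁻¹ b α) * E I α := by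
      rw [clm_eq_sum]
      refine Finset.sum_congr rfl fun I _ => Finset.sum_congr rfl fun α _ => ?_
      rw [hK I α, hE I α]
    have hRHS : ((((Matrix.of A₀)⁻¹)ᵀ) * (Matrix.of Tπ)ᵀ * Matrix.of E * (((Matrix.of A₀)⁻¹)ᵀ)) a b
        = ∑ I, ∑ α, (Matrix.of Tπ * (Matrix.of A₀)⁻¹) I a * (Matrix.of A₀)⁻¹ b α * E I α := by
      simp only [Matrix.mul_apply, Matrix.transpose_apply, Matrix.of_apply, Finset.sum_mul,
        Finset.mul_sum]
      rw [Finset.sum_comm]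
      refine Finset.sum_congr rfl fun I _ => Finset.sum_congr rfl fun α _ => ?_
      refine Finset.sum_congr rfl fun k _ => ?_
      ring
    have hLzA : Lz A₀ = (Matrix.of A₀).det * ℓ Q := by
      rw [hLz A₀]
      congr 1
      exact congrArg ℓ hcA
    rw [hDab, hT1, hadj, hT2, hRHS, hLzA, Matrix.transpose_apply]
    simp only [neg_mul, Finset.sum_neg_distrib, mul_neg]
    ring
  refine ⟨part1, ?_⟩
  have hCdet : IsUnit ((Matrix.of A₀)ᵀ).det := by rwa [Matrix.det_transpose]
  have hLzA : Lz A₀ = (Matrix.of A₀).det * ℓ Q := by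
    rw [hLz A₀]
    congr 1
    exact congrArg ℓ (funext fun i => funext fun ν => (hQ i ν).symm)
  have hofD : Matrix.of D =
      (-(Matrix.of A₀).det) •
          ((((Matrix.of A₀)⁻¹)ᵀ) * (Matrix.of Tπ)ᵀ * Matrix.of E * (((Matrix.of A₀)⁻¹)ᵀ))
        + Lz A₀ • (((Matrix.of A₀)⁻¹)ᵀ) := by
    ext a b
    rw [Matrix.add_apply, Matrix.smul_apply, Matrix.smul_apply, smul_eq_mul, smul_eq_mul]
    exact part1 a b
  have hQt' : (Matrix.of Q)ᵀ = ((Matrix.of A₀)ᵀ)⁻¹ * (Matrix.of Tπ)ᵀ := by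
    have hQmat : Matrix.of Q = Matrix.of Tπ * (Matrix.of A₀)⁻¹ := by
      ext i ν
      exact hQ i ν
    rw [hQmat, Matrix.transpose_mul, Matrix.transpose_nonsing_inv]
  have hL : (Matrix.of A₀)ᵀ * Matrix.of D - Lz A₀ • (1 : Matrix (Fin n) (Fin n) ℝ)
      = (-(Matrix.of A₀).det) • ((Matrix.of Tπ)ᵀ * (Matrix.of E * ((Matrix.of A₀)ᵀ)⁻¹)) := by
    rw [hofD, Matrix.transpose_nonsing_inv]
    rw [Matrix.mul_add, Matrix.mul_smul, Matrix.mul_smul, Matrix.mul_nonsing_inv _ hCdet]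
    simp only [Matrix.mul_assoc]
    rw [Matrix.mul_nonsing_inv_cancel_left _ _ hCdet]
    abel
  have hR : -((Matrix.of A₀).det •
        ((Matrix.of A₀)ᵀ *
          ((Matrix.of Q)ᵀ * Matrix.of E - ℓ Q • (1 : Matrix (Fin n) (Fin n) ℝ)) *
          (((Matrix.of A₀)⁻¹)ᵀ)))
      - Lz A₀ • (1 : Matrix (Fin n) (Fin n) ℝ)
      = (-(Matrix.of A₀).det) • ((Matrix.of Tπ)ᵀ * (Matrix.of E * ((Matrix.of A₀)ᵀ)⁻¹)) := by
    rw [hQt', Matrix.transpose_nonsing_inv, hLzA]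
    have hmid : (Matrix.of A₀)ᵀ *
          (((Matrix.of A₀)ᵀ)⁻¹ * (Matrix.of Tπ)ᵀ * Matrix.of E
            - ℓ Q • (1 : Matrix (Fin n) (Fin n) ℝ)) * ((Matrix.of A₀)ᵀ)⁻¹
        = (Matrix.of Tπ)ᵀ * (Matrix.of E * ((Matrix.of A₀)ᵀ)⁻¹)
            - ℓ Q • (1 : Matrix (Fin n) (Fin n) ℝ) := by
      rw [Matrix.mul_sub, Matrix.sub_mul]
      congr 1
      · simp only [Matrix.mul_assoc]
        rw [Matrix.mul_nonsing_inv_cancel_left _ _ hCdet]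
      · rw [Matrix.mul_smul, Matrix.mul_one, Matrix.smul_mul, Matrix.mul_nonsing_inv _ hCdet]
    rw [hmid, smul_sub]
    module
  exact hL.trans hR.symm
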